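/- arXiv:2104.04082 — 2 statements merged into one kernel-verified Lean document; each statement's English description precedes it below -/
import Mathlib

section
/- Let 0 < α < 1, δ ≥ 0, and let t < T be real numbers. Then ∫_t^T (s − t)^{-α} · e^{-δ s} ds = Γ(1 − α) · e^{-δ T} · (T − t)^{1 − α} · Σ_{k=0}^∞ (δ (T − t))^k / Γ(k + 2 − α). Equivalently, the right Caputo fractional derivative of order α of the function s ↦ −e^{-δ s} on [t, T], namely −(1/Γ(1-α)) ∫_t^T (s − t)^{-α} · (d/ds)(−e^{-δ s}) ds, equals −δ · (T − t)^{1 − α} · e^{-δ T} · E_{1, 2−α}(δ (T − t)). -/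
open Real

open MeasureTheory intervalIntegral Finset


lemma myGamma_add_nat {x : ℝ} (hx : 0 < x) (n : ℕ) :
    Real.Gamma (x + n) = Real.Gamma x * ∏ j ∈ Finset.range n, (x + j) := by
  induction n with
  | zero => simp
  | succ n ih =>
    have h : x + (n:ℝ) ≠ 0 := by positivity
    rw [Nat.cast_succ, ← add_assoc, Real.Gamma_add_one h, ih, Finset.prod_range_succ]
    ring

lemma myBeta_nat {α : ℝ} (hα : α < 1) (k : ℕ) :
    ∫ x in (0:ℝ)..1, x ^ (-α) * (1 - x) ^ k
       = (Nat.factorial k : ℝ) / ∏ j ∈ Finset.range (k+1), (1 - α + j) := by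
  have hu : 0 < (((1-α : ℝ):ℂ)).re := by simpa using by linarith
  have hb := Complex.betaIntegral_eval_nat_add_one_right hu k
  have hbe : Complex.betaIntegral ((1-α : ℝ):ℂ) (k+1)
      = ((∫ x in (0:ℝ)..1, x ^ (-α) * (1 - x) ^ k : ℝ) : ℂ) := by
    rw [Complex.betaIntegral, ← intervalIntegral.integral_ofReal]
    refine intervalIntegral.integral_congr fun x hx => ?_
    rw [Set.uIcc_of_le (by norm_num : (0:ℝ) ≤ 1)] at hx
    obtain ⟨hx0, hx1⟩ := hx
    have h1 : ((1-α : ℝ):ℂ) - 1 = ((-α : ℝ) : ℂ) := by push_cast; ring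
    have h2 : ((k:ℂ) + 1) - 1 = ((k:ℕ) : ℂ) := by push_cast; ring
    rw [h1, h2, Complex.cpow_natCast, ← Complex.ofReal_cpow hx0]
    push_cast
    ring
  rw [hbe] at hb
  have h2 : ((∫ x in (0:ℝ)..1, x ^ (-α) * (1 - x) ^ k : ℝ) : ℂ)
      = (((Nat.factorial k : ℝ) / ∏ j ∈ Finset.range (k+1), (1 - α + j) : ℝ) : ℂ) := by
    rw [hb]; push_cast; ring
  exact_mod_cast h2


lemma myBeta_scaled {α x : ℝ} (hx : 0 < x) (k : ℕ) :
    ∫ u in (0:ℝ)..x, u ^ (-α) * (x - u) ^ k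
      = x ^ ((k:ℝ) + 1 - α) * ∫ v in (0:ℝ)..1, v ^ (-α) * (1 - v) ^ k := by
  have h := intervalIntegral.integral_comp_mul_left
    (fun u => u ^ (-α) * (x - u) ^ k) (a := 0) (b := 1) hx.ne'
  simp only [mul_zero, mul_one, smul_eq_mul] at h
  have h2 : (∫ v in (0:ℝ)..1, (x*v) ^ (-α) * (x - x*v) ^ k)
      = x ^ (-α) * x ^ k * ∫ v in (0:ℝ)..1, v ^ (-α) * (1 - v) ^ k := by
    rw [← intervalIntegral.integral_const_mul]
    refine intervalIntegral.integral_congr fun v hv => ?_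
    rw [Set.uIcc_of_le (by norm_num : (0:ℝ) ≤ 1)] at hv
    rw [Real.mul_rpow hx.le hv.1, show x - x*v = x*(1-v) by ring, mul_pow]
    ring
  rw [h2] at h
  have hxne : x ≠ 0 := hx.ne'
  have hpow : x ^ ((k:ℝ) + 1 - α) = x ^ (k:ℝ) * x * x ^ (-α) := by
    rw [show (k:ℝ) + 1 - α = (k:ℝ) + 1 + (-α) by ring, Real.rpow_add hx, Real.rpow_add hx,
      Real.rpow_one]
  rw [hpow, Real.rpow_natCast]
  field_simp at h ⊢
  linarith [h]

lemma myProd_pos {α : ℝ} (hα : α < 1) (k : ℕ) :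
    0 < ∏ j ∈ Finset.range (k+1), (1 - α + (j:ℝ)) := by
  refine Finset.prod_pos fun j _ => ?_
  have : (0:ℝ) ≤ j := Nat.cast_nonneg j
  linarith

lemma myProd_ge {α : ℝ} (hα : α < 1) (k : ℕ) :
    (1 - α) * (Nat.factorial k : ℝ) ≤ ∏ j ∈ Finset.range (k+1), (1 - α + (j:ℝ)) := by
  rw [Finset.prod_range_succ' (fun j => (1 - α + (j:ℝ)))]
  push_cast
  simp only [add_zero]
  rw [mul_comm]
  refine mul_le_mul_of_nonneg_right ?_ (by linarith)
  calc (Nat.factorial k : ℝ) = ∏ j ∈ Finset.range k, ((j:ℝ) + 1) := by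
        rw [← Finset.prod_range_add_one_eq_factorial k]; push_cast; ring
    _ ≤ ∏ j ∈ Finset.range k, (1 - α + ((j:ℝ) + 1)) := by
        refine Finset.prod_le_prod (fun j _ => by positivity) fun j _ => by linarith

lemma myCore {α δ x : ℝ} (hα0 : 0 < α) (hα1 : α < 1) (hδ : 0 ≤ δ) (hx : 0 < x) :
    (∫ u in (0:ℝ)..x, u ^ (-α) * Real.exp (δ * (x - u)))
      = Real.Gamma (1-α) * x ^ (1-α) * ∑' k : ℕ, (δ * x) ^ k / Real.Gamma ((k:ℝ) + 2 - α) := by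
  have hxk : ∀ k : ℕ, x ^ ((k:ℝ)+1-α) = x^(1-α) * x^k := by
    intro k
    rw [← Real.rpow_natCast x k, ← Real.rpow_add hx]
    ring_nf
  have hexp : ∀ u : ℝ, u ^ (-α) * Real.exp (δ * (x-u))
      = ∑' k : ℕ, u ^ (-α) * ((δ * (x - u)) ^ k / (Nat.factorial k : ℝ)) := by
    intro u
    rw [Real.exp_eq_exp_ℝ, NormedSpace.exp_eq_tsum_div, ← tsum_mul_left]
  have hFint : ∀ k : ℕ, IntervalIntegrable
      (fun u => u ^ (-α) * ((δ * (x - u)) ^ k / (Nat.factorial k : ℝ))) volume 0 x := by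
    intro k
    exact (intervalIntegral.intervalIntegrable_rpow' (by linarith)).mul_continuousOn
      (Continuous.continuousOn (by continuity))
  have hFval : ∀ k : ℕ, (∫ u in (0:ℝ)..x, u ^ (-α) * ((δ * (x - u)) ^ k / (Nat.factorial k : ℝ)))
      = δ^k * x^((k:ℝ)+1-α) / ∏ j ∈ Finset.range (k+1), (1-α+(j:ℝ)) := by
    intro k
    have h1 : (∫ u in (0:ℝ)..x, u ^ (-α) * ((δ * (x - u)) ^ k / (Nat.factorial k : ℝ)))
        = (δ^k / (Nat.factorial k : ℝ)) * ∫ u in (0:ℝ)..x, u ^ (-α) * (x - u) ^ k := by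
      rw [← intervalIntegral.integral_const_mul]
      refine intervalIntegral.integral_congr fun u _ => ?_
      rw [mul_pow]; ring
    have hf : (Nat.factorial k : ℝ) ≠ 0 := Nat.cast_ne_zero.mpr k.factorial_ne_zero
    have hp := (myProd_pos hα1 k).ne'
    rw [h1, myBeta_scaled hx, myBeta_nat hα1]
    field_simp
  have hFnn : ∀ (k : ℕ), ∀ u ∈ Set.Ioc (0:ℝ) x,
      0 ≤ u ^ (-α) * ((δ*(x-u))^k / (Nat.factorial k : ℝ)) := by
    intro k u hu
    have h1 : 0 ≤ u ^ (-α) := Real.rpow_nonneg hu.1.le _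
    have h2 : 0 ≤ δ * (x - u) := mul_nonneg hδ (by linarith [hu.2])
    positivity
  have hnorm : ∀ k : ℕ, (∫ u in Set.Ioc (0:ℝ) x, ‖u ^ (-α) * ((δ*(x-u))^k / (Nat.factorial k : ℝ))‖)
      = δ^k * x^((k:ℝ)+1-α) / ∏ j ∈ Finset.range (k+1), (1-α+(j:ℝ)) := by
    intro k
    rw [← hFval k, intervalIntegral.integral_of_le hx.le]
    exact MeasureTheory.setIntegral_congr_fun measurableSet_Ioc
      fun u hu => Real.norm_of_nonneg (hFnn k u hu)
  have hsum : Summable (fun k : ℕ =>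
      δ^k * x^((k:ℝ)+1-α) / ∏ j ∈ Finset.range (k+1), (1-α+(j:ℝ))) := by
    refine Summable.of_nonneg_of_le
      (fun k => by have := (myProd_pos hα1 k); positivity) (fun k => ?_)
      ((Real.summable_pow_div_factorial (δ*x)).mul_left (x^(1-α)/(1-α)))
    have hp := myProd_pos hα1 k
    have hg := myProd_ge hα1 k
    have hf : (0:ℝ) < (Nat.factorial k : ℝ) := by positivity
    have key : δ^k * x^((k:ℝ)+1-α) / ((1-α) * (Nat.factorial k : ℝ))
        = (x^(1-α)/(1-α)) * ((δ*x)^k / (Nat.factorial k : ℝ)) := by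
      rw [hxk k, mul_pow]
      field_simp
    rw [← key]
    have hnum : (0:ℝ) ≤ δ^k * x^((k:ℝ)+1-α) := by positivity
    exact div_le_div_of_nonneg_left hnum (by nlinarith) hg
  rw [intervalIntegral.integral_of_le hx.le]
  simp_rw [hexp]
  rw [← MeasureTheory.integral_tsum_of_summable_integral_norm (fun k => (hFint k).1)
    (by simpa only [hnorm] using hsum)]
  rw [← tsum_mul_left]
  refine tsum_congr fun k => ?_
  rw [← intervalIntegral.integral_of_le hx.le, hFval k]
  have hΓ : Real.Gamma ((k:ℝ)+2-α)
      = Real.Gamma (1-α) * ∏ j ∈ Finset.range (k+1), (1-α+(j:ℝ)) := by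
    have h := myGamma_add_nat (by linarith : (0:ℝ) < 1-α) (k+1)
    rw [show (1-α) + ((k+1:ℕ):ℝ) = (k:ℝ)+2-α by push_cast; ring] at h
    exact h
  have hΓpos : 0 < Real.Gamma (1-α) := Real.Gamma_pos_of_pos (by linarith)
  have hp := (myProd_pos hα1 k).ne'
  rw [hΓ, mul_pow, hxk k]
  field_simp

/-- `∫_t^T (s-t)^{-α} e^{-δs} ds = Γ(1-α) e^{-δT} (T-t)^{1-α} Σ_k (δ(T-t))^k / Γ(k+2-α)`;
equivalently, the right Caputo derivative of order `α` of `s ↦ -e^{-δs}` on `[t,T]`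
equals `-δ (T-t)^{1-α} e^{-δT} E_{1,2-α}(δ(T-t))`. -/
theorem integral_rpow_mul_exp_eq_mittagLeffler
    (α δ t T : ℝ) (hα0 : 0 < α) (hα1 : α < 1) (hδ : 0 ≤ δ) (htT : t < T) :
    (∫ s in t..T, (s - t) ^ (-α) * Real.exp (-δ * s)) =
      Real.Gamma (1 - α) * Real.exp (-δ * T) * (T - t) ^ (1 - α) *
        ∑' k : ℕ, (δ * (T - t)) ^ k / Real.Gamma ((k : ℝ) + 2 - α) ∧
    -(1 / Real.Gamma (1 - α)) *
        (∫ s in t..T, (s - t) ^ (-α) * deriv (fun u => -Real.exp (-δ * u)) s) =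
      -δ * (T - t) ^ (1 - α) * Real.exp (-δ * T) *
        ∑' k : ℕ, (δ * (T - t)) ^ k / Real.Gamma (1 * (k : ℝ) + (2 - α)) := by
  have hx : 0 < T - t := sub_pos.mpr htT
  have h1 : (∫ s in t..T, (s - t) ^ (-α) * Real.exp (-δ * s)) =
      Real.Gamma (1 - α) * Real.exp (-δ * T) * (T - t) ^ (1 - α) *
        ∑' k : ℕ, (δ * (T - t)) ^ k / Real.Gamma ((k : ℝ) + 2 - α) := by
    have hshift := intervalIntegral.integral_comp_add_right
      (fun s => (s - t) ^ (-α) * Real.exp (-δ * s)) (a := 0) (b := T - t) t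
    simp only [zero_add, sub_add_cancel, add_sub_cancel_right] at hshift
    rw [← hshift]
    have hsplit : ∀ u : ℝ, u ^ (-α) * Real.exp (-δ * (u + t))
        = Real.exp (-δ * T) * (u ^ (-α) * Real.exp (δ * ((T - t) - u))) := by
      intro u
      rw [show -δ * (u + t) = -δ * T + δ * ((T - t) - u) by ring, Real.exp_add]
      ring
    simp_rw [hsplit]
    rw [intervalIntegral.integral_const_mul, myCore hα0 hα1 hδ hx]
    ring
  refine ⟨h1, ?_⟩
  have hderiv : ∀ s : ℝ, deriv (fun u => -Real.exp (-δ * u)) s = δ * Real.exp (-δ * s) := by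
    intro s
    have hd : HasDerivAt (fun u : ℝ => -δ * u) (-δ) s := by
      simpa using (hasDerivAt_id s).const_mul (-δ)
    have h3 : HasDerivAt (fun u => -Real.exp (-δ * u)) (-(Real.exp (-δ * s) * -δ)) s :=
      (hd.exp).neg
    rw [h3.deriv]
    ring
  have h2 : (∫ s in t..T, (s - t) ^ (-α) * deriv (fun u => -Real.exp (-δ * u)) s)
      = δ * ∫ s in t..T, (s - t) ^ (-α) * Real.exp (-δ * s) := by
    rw [← intervalIntegral.integral_const_mul]
    refine intervalIntegral.integral_congr fun s _ => ?_
    rw [hderiv s]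
    ring
  have hone : ∀ k : ℕ, (1:ℝ) * (k:ℝ) + (2 - α) = (k:ℝ) + 2 - α := fun k => by ring
  simp_rw [hone]
  rw [h2, h1]
  have hΓpos : 0 < Real.Gamma (1 - α) := Real.Gamma_pos_of_pos (by linarith)
  field_simp
end

section
/- Let 0 < α < 1, r > 0, K > 0, δ ≥ 0 and T > 0. Define x*_α : [0,T] → ℝ by x*_α(t) = (K/2)·(1 − (δ/r)·(T − t)^{1−α}·e^{-δ(T−t)}·E_{1,2−α}(δ(T−t))), where E_{1,2−α}(z) = Σ_{k=0}^∞ z^k / Γ(k + 2 − α). Then for every t ∈ [0,T): e^{-δ t}·r·(1 − 2·x*_α(t)/K) − (δ/Γ(1−α))·∫_t^T (s − t)^{-α}·e^{-δ s} ds = 0; that is, x*_α satisfies the fractional Euler–Lagrange equation e^{-δ t}·r·(1 − 2x(t)/K) − δ·(T−t)^{1−α}·e^{-δ T}·E_{1,2−α}(δ(T−t)) = 0 of the fractional harvest problem. -/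
open Real intervalIntegral MeasureTheory



lemma betaJ (α τ : ℝ) (hα0 : 0 < α) (hα1 : α < 1) (hτ : 0 < τ) (k : ℕ) :
    ∫ u in (0:ℝ)..τ, u ^ (-α) * (τ - u) ^ k
      = τ ^ ((k:ℝ) + 1 - α) * (Real.Gamma (1 - α) * k.factorial / Real.Gamma ((k:ℝ) + 2 - α)) := by
  set s : ℂ := ((1 - α : ℝ) : ℂ) with hs
  set t : ℂ := ((k : ℕ) : ℂ) + 1 with ht
  have hsre : 0 < s.re := by simp [hs]; linarith
  have htre : 0 < t.re := by simp [ht]; positivity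
  have key : ((∫ u in (0:ℝ)..τ, u ^ (-α) * (τ - u) ^ k : ℝ) : ℂ)
      = ∫ u in (0:ℝ)..τ, (u : ℂ) ^ (s - 1) * ((τ : ℂ) - u) ^ (t - 1) := by
    rw [← intervalIntegral.integral_ofReal]
    apply intervalIntegral.integral_congr
    intro u hu
    rw [Set.uIcc_of_le hτ.le] at hu
    have hu0 : (0:ℝ) ≤ u := hu.1
    have huτ : u ≤ τ := hu.2
    have h1 : (u : ℂ) ^ (s - 1) = ((u ^ (-α) : ℝ) : ℂ) := by
      rw [Complex.ofReal_cpow hu0]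
      congr 1
      simp [hs]
    have h2 : ((τ : ℂ) - u) ^ (t - 1) = (((τ - u) ^ k : ℝ) : ℂ) := by
      have : t - 1 = ((k : ℕ) : ℂ) := by ring
      rw [this, Complex.cpow_natCast]
      push_cast
      ring
    simp only [Complex.ofReal_mul, h1, h2]
  rw [Complex.betaIntegral_scaled s t hτ] at key
  have hbeta : Complex.betaIntegral s t
      = ((Real.Gamma (1 - α) * k.factorial / Real.Gamma ((k:ℝ) + 2 - α) : ℝ) : ℂ) := by
    have hst : s + t = (((k:ℝ) + 2 - α : ℝ) : ℂ) := by push_cast [hs, ht]; ring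
    have hΓst : Complex.Gamma (s + t) ≠ 0 := by
      rw [hst, Complex.Gamma_ofReal]
      exact_mod_cast (Real.Gamma_pos_of_pos (by push_cast; linarith)).ne'
    have := Complex.Gamma_mul_Gamma_eq_betaIntegral hsre htre
    have hβ : Complex.betaIntegral s t = Complex.Gamma s * Complex.Gamma t / Complex.Gamma (s + t) := by
      rw [eq_div_iff hΓst]
      linear_combination -this
    rw [hβ, hst, hs, ht, Complex.Gamma_nat_eq_factorial, Complex.Gamma_ofReal,
      Complex.Gamma_ofReal]
    push_cast
    ring
  rw [hbeta] at key
  have hτc : (τ : ℂ) ^ (s + t - 1) = ((τ ^ ((k:ℝ) + 1 - α) : ℝ) : ℂ) := by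
    rw [Complex.ofReal_cpow hτ.le]
    congr 1
    push_cast [hs, ht]
    ring
  rw [hτc, ← Complex.ofReal_mul] at key
  exact_mod_cast key

lemma gam_lb (α : ℝ) (hα1 : α < 1) : ∀ k : ℕ,
    (k.factorial : ℝ) * Real.Gamma (2 - α) ≤ Real.Gamma ((k:ℝ) + 2 - α) := by
  intro k
  induction k with
  | zero => simp
  | succ k ih =>
    have hk : (0:ℝ) ≤ (k:ℝ) := Nat.cast_nonneg k
    have h1 : ((k:ℝ) + 1) + 2 - α = ((k:ℝ) + 2 - α) + 1 := by ring
    have h2 : ((k:ℝ) + 2 - α) ≠ 0 := by linarith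
    rw [Nat.factorial_succ]
    push_cast
    rw [h1, Real.Gamma_add_one h2]
    have hfk : (0:ℝ) ≤ (k.factorial : ℝ) * Real.Gamma (2 - α) := by
      have := Real.Gamma_pos_of_pos (show (0:ℝ) < 2 - α by linarith)
      positivity
    calc (((k:ℝ)+1) * (k.factorial : ℝ)) * Real.Gamma (2 - α)
        = ((k:ℝ)+1) * ((k.factorial : ℝ) * Real.Gamma (2 - α)) := by ring
      _ ≤ ((k:ℝ) + 2 - α) * Real.Gamma ((k:ℝ) + 2 - α) := by
          apply mul_le_mul (by linarith) ih hfk (by linarith)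

lemma keyIntegral (α δ t T : ℝ) (hα0 : 0 < α) (hα1 : α < 1) (hδ : 0 ≤ δ) (htT : t < T) :
    ∫ s in t..T, (s - t) ^ (-α) * Real.exp (-δ * s)
      = Real.Gamma (1 - α) * (T - t) ^ (1 - α) * Real.exp (-δ * T) *
        ∑' k : ℕ, (δ * (T - t)) ^ k / Real.Gamma ((k : ℝ) + 2 - α) := by
  have hτ : 0 < T - t := by linarith
  have hΓpos : ∀ k : ℕ, 0 < Real.Gamma ((k:ℝ) + 2 - α) := by
    intro k
    apply Real.Gamma_pos_of_pos
    have hk : (0:ℝ) ≤ (k:ℝ) := Nat.cast_nonneg k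
    linarith
  set F : ℕ → ℝ → ℝ :=
    fun k s => Real.exp (-δ*T) * δ^k / (k.factorial : ℝ) * ((s - t) ^ (-α) * (T - s)^k) with hF
  have hbase : IntervalIntegrable (fun s => (s - t) ^ (-α)) volume t T := by
    have h0 := (intervalIntegrable_rpow' (a := 0) (b := T - t)
      (show (-1:ℝ) < -α by linarith)).comp_sub_right t
    simpa using h0
  have hint : ∀ k : ℕ, IntervalIntegrable (fun s => (s - t) ^ (-α) * (T - s)^k) volume t T :=
    fun k => hbase.mul_continuousOn (Continuous.continuousOn (by continuity))
  have hFint : ∀ k : ℕ, IntervalIntegrable (F k) volume t T :=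
    fun k => ((hint k).const_mul _)
  have hval : ∀ k : ℕ, ∫ s in t..T, (s - t) ^ (-α) * (T - s)^k
      = (T - t) ^ ((k:ℝ)+1-α) * (Real.Gamma (1-α) * k.factorial / Real.Gamma ((k:ℝ)+2-α)) := by
    intro k
    have h1 : (∫ s in t..T, (s - t) ^ (-α) * (T - s)^k)
        = ∫ s in t..T, (fun u => u ^ (-α) * ((T - t) - u)^k) (s - t) := by
      apply intervalIntegral.integral_congr
      intro s _
      simp only []
      congr 2
      ring
    have h2 := intervalIntegral.integral_comp_sub_right (a := t) (b := T)
      (fun u => u ^ (-α) * ((T - t) - u)^k) t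
    rw [sub_self] at h2
    rw [h1, h2, betaJ α (T - t) hα0 hα1 hτ k]
  have hFval : ∀ k : ℕ, ∫ s in t..T, F k s
      = (Real.exp (-δ*T) * Real.Gamma (1-α) * (T-t)^(1-α)) *
        ((δ * (T - t)) ^ k / Real.Gamma ((k:ℝ) + 2 - α)) := by
    intro k
    rw [hF]
    simp only []
    rw [intervalIntegral.integral_const_mul, hval k]
    have hrp : (T - t) ^ ((k:ℝ)+1-α) = (T - t)^(k:ℕ) * (T - t)^(1-α) := by
      rw [← Real.rpow_natCast (T - t) k, ← Real.rpow_add hτ]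
      congr 1
      ring
    have hfac : (k.factorial : ℝ) ≠ 0 := by positivity
    rw [hrp, mul_pow]
    field_simp
  have hFnn : ∀ k : ℕ, ∀ s ∈ Set.Ioc t T, 0 ≤ F k s := by
    intro k s hs
    have h1 : (0:ℝ) ≤ s - t := by linarith [hs.1]
    have h2 : (0:ℝ) ≤ T - s := by linarith [hs.2]
    have h3 : (0:ℝ) ≤ (s - t) ^ (-α) := Real.rpow_nonneg h1 _
    have h4 : (0:ℝ) ≤ δ^k := pow_nonneg hδ k
    rw [hF]
    simp only []
    have h5 : (0:ℝ) < Real.exp (-δ*T) := Real.exp_pos _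
    positivity
  have hnormval : ∀ k : ℕ, (∫ s in Set.Ioc t T, ‖F k s‖)
      = (Real.exp (-δ*T) * Real.Gamma (1-α) * (T-t)^(1-α)) *
        ((δ * (T - t)) ^ k / Real.Gamma ((k:ℝ) + 2 - α)) := by
    intro k
    rw [← hFval k, intervalIntegral.integral_of_le htT.le]
    apply MeasureTheory.setIntegral_congr_fun measurableSet_Ioc
    intro s hs
    exact Real.norm_of_nonneg (hFnn k s hs)
  have hsum0 : Summable (fun k : ℕ => (δ * (T - t)) ^ k / Real.Gamma ((k:ℝ) + 2 - α)) := by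
    have hΓ2 : 0 < Real.Gamma (2 - α) := Real.Gamma_pos_of_pos (by linarith)
    have hnum : ∀ k : ℕ, (0:ℝ) ≤ (δ * (T - t)) ^ k :=
      fun k => pow_nonneg (mul_nonneg hδ hτ.le) k
    apply Summable.of_nonneg_of_le
      (fun k => div_nonneg (hnum k) (hΓpos k).le)
      (fun k => ?_)
      (((Real.summable_pow_div_factorial (δ * (T - t))).div_const (Real.Gamma (2 - α))))
    have hb : (0:ℝ) < (k.factorial : ℝ) * Real.Gamma (2 - α) :=
      mul_pos (by exact_mod_cast k.factorial_pos) hΓ2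
    calc (δ * (T - t)) ^ k / Real.Gamma ((k:ℝ) + 2 - α)
        ≤ (δ * (T - t)) ^ k / ((k.factorial : ℝ) * Real.Gamma (2 - α)) :=
          div_le_div_of_nonneg_left (hnum k) hb (gam_lb α hα1 k)
      _ = (δ * (T - t)) ^ k / (k.factorial : ℝ) / Real.Gamma (2 - α) := by rw [div_div]
  have hsumnorm : Summable (fun k : ℕ => ∫ s in Set.Ioc t T, ‖F k s‖) := by
    simp_rw [hnormval]
    exact hsum0.mul_left _
  have hInt : ∀ k : ℕ, Integrable (F k) (volume.restrict (Set.Ioc t T)) := fun k => (hFint k).1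
  have hswap := MeasureTheory.integral_tsum_of_summable_integral_norm hInt hsumnorm
  have hpt : ∀ s ∈ Set.Ioc t T, (∑' k : ℕ, F k s) = (s - t)^(-α) * Real.exp (-δ * s) := by
    intro s hs
    have hterm : ∀ k : ℕ, F k s
        = (δ*(T - s))^k / (k.factorial : ℝ) * (Real.exp (-δ*T) * (s - t)^(-α)) := by
      intro k
      have hfac : (k.factorial : ℝ) ≠ 0 := by positivity
      rw [hF]
      simp only []
      rw [mul_pow]
      field_simp
    rw [tsum_congr hterm, tsum_mul_right]
    have hexp : (∑' k : ℕ, (δ*(T - s))^k / (k.factorial : ℝ)) = Real.exp (δ*(T-s)) := by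
      rw [Real.exp_eq_exp_ℝ, NormedSpace.exp_eq_tsum_div]
    rw [hexp, ← mul_assoc, ← Real.exp_add, show δ*(T-s) + -δ*T = -δ*s by ring, mul_comm]
  have hL : (∫ s in Set.Ioc t T, (∑' k : ℕ, F k s))
      = ∫ s in t..T, (s - t)^(-α) * Real.exp (-δ*s) := by
    rw [intervalIntegral.integral_of_le htT.le]
    exact MeasureTheory.setIntegral_congr_fun measurableSet_Ioc hpt
  have hR : (∑' k : ℕ, ∫ s in Set.Ioc t T, F k s)
      = (Real.exp (-δ*T) * Real.Gamma (1-α) * (T-t)^(1-α)) *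
        ∑' k : ℕ, (δ*(T-t))^k / Real.Gamma ((k:ℝ)+2-α) := by
    have h : ∀ k : ℕ, (∫ s in Set.Ioc t T, F k s)
        = (Real.exp (-δ*T) * Real.Gamma (1-α) * (T-t)^(1-α)) *
          ((δ*(T-t))^k / Real.Gamma ((k:ℝ)+2-α)) := by
      intro k
      rw [← intervalIntegral.integral_of_le htT.le]
      exact hFval k
    rw [tsum_congr h, tsum_mul_left]
  rw [← hL, ← hswap, hR]
  ring

/-- The function `x*_α(t) = (K/2)(1 - (δ/r)(T-t)^{1-α} e^{-δ(T-t)} E_{1,2-α}(δ(T-t)))`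
satisfies the fractional Euler–Lagrange equation of the fractional harvest problem. -/
theorem fractional_optimal_population_satisfies_euler_lagrange
    (α r K δ T : ℝ) (hα0 : 0 < α) (hα1 : α < 1) (hr : 0 < r) (hK : 0 < K)
    (hδ : 0 ≤ δ) (hT : 0 < T)
    (x : ℝ → ℝ)
    (hx : ∀ t, x t = K / 2 * (1 - δ / r * (T - t) ^ (1 - α) * Real.exp (-δ * (T - t)) *
        ∑' k : ℕ, (δ * (T - t)) ^ k / Real.Gamma ((k : ℝ) + 2 - α))) :
    ∀ t ∈ Set.Ico (0:ℝ) T,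
      Real.exp (-δ * t) * r * (1 - 2 * x t / K) -
        δ / Real.Gamma (1 - α) * (∫ s in t..T, (s - t) ^ (-α) * Real.exp (-δ * s)) = 0 ∧
      Real.exp (-δ * t) * r * (1 - 2 * x t / K) -
        δ * (T - t) ^ (1 - α) * Real.exp (-δ * T) *
          (∑' k : ℕ, (δ * (T - t)) ^ k / Real.Gamma ((k : ℝ) + 2 - α)) = 0 := by
  intro t ht
  obtain ⟨ht0, htT⟩ := ht
  have hτ : 0 < T - t := by linarith
  set E : ℝ := ∑' k : ℕ, (δ * (T - t)) ^ k / Real.Gamma ((k : ℝ) + 2 - α) with hE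
  have hΓ : Real.Gamma (1 - α) ≠ 0 := (Real.Gamma_pos_of_pos (by linarith)).ne'
  have hxt : x t = K / 2 * (1 - δ / r * (T - t) ^ (1 - α) * Real.exp (-δ * (T - t)) * E) := by
    rw [hx t, ← hE]
  have h2 : Real.exp (-δ * t) * Real.exp (-δ * (T - t)) = Real.exp (-δ * T) := by
    rw [← Real.exp_add]
    congr 1
    ring
  have halg : Real.exp (-δ * t) * r * (1 - 2 * x t / K)
      = δ * (T - t) ^ (1 - α) * Real.exp (-δ * T) * E := by
    rw [hxt]
    have h1 : 1 - 2 * (K / 2 * (1 - δ / r * (T - t) ^ (1 - α) * Real.exp (-δ * (T - t)) * E)) / K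
        = δ / r * (T - t) ^ (1 - α) * Real.exp (-δ * (T - t)) * E := by
      field_simp
      ring
    rw [h1]
    have h3 : Real.exp (-δ * t) * r * (δ / r * (T - t) ^ (1 - α) * Real.exp (-δ * (T - t)) * E)
        = δ * (T - t) ^ (1 - α) * (Real.exp (-δ * t) * Real.exp (-δ * (T - t))) * E := by
      field_simp
    rw [h3, h2]
  constructor
  · rw [keyIntegral α δ t T hα0 hα1 hδ htT, ← hE, halg]
    field_simp
    ring
  · rw [halg]
    ring
end
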